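/- For any complex number b that is not the inverse of a nonzero integer, the product e_i ∘ e_j = (i/(1 + b·j))·e_{i+j} on E = ⊕_{i∈ℤ} ℂe_i satisfies the pre-Lie identity. -/

import Mathlib

/-- The bilinear product on `E = ⊕_{i∈ℤ} ℂ e_i` determined on basis elements by
`e_i ∘ e_j = c i j • e_{i+j}`. -/
noncomputable def gradedProd (c : ℤ → ℤ → ℂ) (x y : ℤ →₀ ℂ) : ℤ →₀ ℂ :=
  x.sum fun i xi => y.sum fun j yj => Finsupp.single (i + j) (xi * yj * c i j)

lemma gp_zero_left (c : ℤ → ℤ → ℂ) (y : ℤ →₀ ℂ) : gradedProd c 0 y = 0 := by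
  simp [gradedProd]

lemma gp_zero_right (c : ℤ → ℤ → ℂ) (x : ℤ →₀ ℂ) : gradedProd c x 0 = 0 := by
  simp [gradedProd]

lemma gp_add_left (c : ℤ → ℤ → ℂ) (x x' y : ℤ →₀ ℂ) :
    gradedProd c (x + x') y = gradedProd c x y + gradedProd c x' y := by
  classical
  unfold gradedProd
  rw [Finsupp.sum_add_index']
  · intro i
    simp
  · intro i b₁ b₂
    rw [← Finsupp.sum_add]
    congr 1
    ext j yj
    rw [add_mul, add_mul, Finsupp.single_add]

lemma gp_add_right (c : ℤ → ℤ → ℂ) (x y y' : ℤ →₀ ℂ) :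
    gradedProd c x (y + y') = gradedProd c x y + gradedProd c x y' := by
  classical
  unfold gradedProd
  rw [← Finsupp.sum_add]
  congr 1
  ext i xi
  rw [Finsupp.sum_add_index']
  · intro j
    simp
  · intro j b₁ b₂
    rw [mul_add, add_mul, Finsupp.single_add]

lemma gp_single (c : ℤ → ℤ → ℂ) (i j : ℤ) (a d : ℂ) :
    gradedProd c (Finsupp.single i a) (Finsupp.single j d)
      = Finsupp.single (i + j) (a * d * c i j) := by
  classical
  unfold gradedProd
  rw [Finsupp.sum_single_index, Finsupp.sum_single_index]
  · simp
  · simp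

/-- For any `b : ℂ` that is not the inverse of a nonzero integer, the product
`e_i ∘ e_j = (i / (1 + b j)) e_{i+j}` satisfies the pre-Lie identity. -/
theorem Bb_is_preLie (b : ℂ) (hb : ∀ n : ℤ, n ≠ 0 → b ≠ (n : ℂ)⁻¹) :
    ∀ x y z : ℤ →₀ ℂ,
      gradedProd (fun i j => i / (1 + b * j)) (gradedProd (fun i j => i / (1 + b * j)) x y) z
        - gradedProd (fun i j => i / (1 + b * j)) x (gradedProd (fun i j => i / (1 + b * j)) y z)
      = gradedProd (fun i j => i / (1 + b * j)) (gradedProd (fun i j => i / (1 + b * j)) x z) y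
        - gradedProd (fun i j => i / (1 + b * j)) x (gradedProd (fun i j => i / (1 + b * j)) z y) := by
  have hden : ∀ m : ℤ, (1 : ℂ) + b * m ≠ 0 := by
    intro m hm
    rcases eq_or_ne m 0 with h0 | h0
    · simp [h0] at hm
    · have hm' : (m : ℂ) ≠ 0 := Int.cast_ne_zero.mpr h0
      apply hb (-m) (neg_ne_zero.mpr h0)
      push_cast
      exact eq_inv_of_mul_eq_one_right (by linear_combination -hm)
  set c : ℤ → ℤ → ℂ := fun i j => i / (1 + b * j) with hc
  intro x y z
  induction x using Finsupp.induction_linear with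
  | zero => simp [gp_zero_left, gp_zero_right]
  | add x x' hx hx' =>
      simp only [gp_add_left, gp_add_right] at *
      rw [add_sub_add_comm, hx, hx', add_sub_add_comm]
  | single i a =>
    induction y using Finsupp.induction_linear with
    | zero => simp [gp_zero_left, gp_zero_right]
    | add y y' hy hy' =>
        simp only [gp_add_left, gp_add_right] at *
        rw [add_sub_add_comm, hy, hy', add_sub_add_comm]
    | single j d =>
      induction z using Finsupp.induction_linear with
      | zero => simp [gp_zero_left, gp_zero_right]
      | add z z' hz hz' =>
          simp only [gp_add_left, gp_add_right] at *
          rw [add_sub_add_comm, hz, hz', add_sub_add_comm]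
      | single k e =>
        rw [gp_single, gp_single, gp_single, gp_single, gp_single, gp_single, gp_single,
          gp_single]
        have h1 : i + (j + k) = i + j + k := by ring
        have h2 : i + k + j = i + j + k := by ring
        have h3 : i + (k + j) = i + j + k := by ring
        rw [h1, h2, h3, ← Finsupp.single_sub, ← Finsupp.single_sub]
        congr 1
        simp only [hc]
        have hj := hden j
        have hk := hden k
        have hjk := hden (j + k)
        have hkj := hden (k + j)
        push_cast at *
        field_simp
        ring
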